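/- For all integers d ≥ 2 and n ≥ 0, let d_R := max_{λ ∈ R_{n,d}} d_λ and d_tot := Σ_{λ ∈ R_{n,d}} d_λ. Then ⌈log₂ d_R⌉ + ⌈log₂ d_tot⌉ ≤ (d² − 1) · log₂(n+1) + 2, where the logarithms are real-valued and ⌈·⌉ is the ceiling function. -/

import Mathlib

/-- The set of Young diagrams with at most `d` rows and `n` boxes. -/
def youngSet (n d : ℕ) : Set (Fin d → ℕ) := {l | Antitone l ∧ ∑ i, l i = n}

/-- The Weyl dimension formula (as a real number) for the `SU(d)` irreducible
representation with Young diagram `l`. -/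
noncomputable def weylDim (d : ℕ) (l : Fin d → ℕ) : ℝ :=
  (∏ i : Fin d, ∏ j ∈ Finset.Ioi i, (((l i : ℝ) - (l j : ℝ)) + ((j : ℕ) : ℝ) - ((i : ℕ) : ℝ))) /
    (∏ k ∈ Finset.range d, (Nat.factorial k : ℝ))

lemma nat_prod_range_sub (m : ℕ) :
    ∏ i ∈ Finset.range m, (m - i) = m.factorial := by
  have h1 : ∏ j ∈ Finset.range m, (m - (m - 1 - j)) = ∏ j ∈ Finset.range m, (j + 1) :=
    Finset.prod_congr rfl fun j hj => by
      simp only [Finset.mem_range] at hj; omega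
  rw [← Finset.prod_range_reflect (fun i => m - i) m, h1,
    Finset.prod_range_add_one_eq_factorial]

lemma real_prod_Iio {d : ℕ} (j : Fin d) :
    ∏ i ∈ Finset.Iio j, (((j : ℕ) : ℝ) - ((i : ℕ) : ℝ)) = ((j : ℕ).factorial : ℝ) := by
  have hcongr : ∀ i ∈ Finset.Iio j,
      (((j : ℕ) : ℝ) - ((i : ℕ) : ℝ)) = ((((j : ℕ) - (i : ℕ) : ℕ)) : ℝ) := by
    intro i hi
    have : (i : ℕ) ≤ (j : ℕ) := (Finset.mem_Iio.mp hi).le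
    rw [Nat.cast_sub this]
  rw [Finset.prod_congr rfl hcongr, ← Nat.cast_prod]
  congr 1
  have := Fin.map_valEmbedding_Iio (a := j)
  calc ∏ i ∈ Finset.Iio j, ((j : ℕ) - (i : ℕ))
      = ∏ k ∈ (Finset.Iio j).map Fin.valEmbedding, ((j : ℕ) - k) := by
        rw [Finset.prod_map]; rfl
    _ = ∏ k ∈ Finset.Iio (j : ℕ), ((j : ℕ) - k) := by rw [this]
    _ = ∏ k ∈ Finset.range (j : ℕ), ((j : ℕ) - k) := by rw [Nat.Iio_eq_range]
    _ = (j : ℕ).factorial := nat_prod_range_sub _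

lemma prod_den (d : ℕ) :
    ∏ i : Fin d, ∏ j ∈ Finset.Ioi i, (((j : ℕ) : ℝ) - ((i : ℕ) : ℝ)) =
      ∏ k ∈ Finset.range d, (Nat.factorial k : ℝ) := by
  rw [Finset.prod_comm' (t' := Finset.univ) (s' := fun j => Finset.Iio j)
    (by intro x y; simp [Finset.mem_Ioi, Finset.mem_Iio])]
  rw [Finset.prod_congr rfl (fun j _ => real_prod_Iio j)]
  exact Fin.prod_univ_eq_prod_range (fun k => (Nat.factorial k : ℝ)) d

lemma weylDim_bounds {d n : ℕ} {l : Fin d → ℕ} (hl : l ∈ youngSet n d) :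
    1 ≤ weylDim d l ∧
      weylDim d l ≤ ((n : ℝ) + 1) ^ (∑ i : Fin d, (Finset.Ioi i).card) := by
  obtain ⟨hmono, hsum⟩ := hl
  have hden : (0 : ℝ) < ∏ k ∈ Finset.range d, (Nat.factorial k : ℝ) :=
    Finset.prod_pos fun k _ => by exact_mod_cast k.factorial_pos
  have hli : ∀ i, l i ≤ n := by
    intro i
    calc l i ≤ ∑ j, l j := Finset.single_le_sum (fun j _ => Nat.zero_le _) (Finset.mem_univ i)
      _ = n := hsum
  have hterm : ∀ i : Fin d, ∀ j ∈ Finset.Ioi i,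
      ((((j : ℕ) : ℝ) - ((i : ℕ) : ℝ)) ≤
        ((l i : ℝ) - (l j : ℝ)) + ((j : ℕ) : ℝ) - ((i : ℕ) : ℝ)) ∧
      (((l i : ℝ) - (l j : ℝ)) + ((j : ℕ) : ℝ) - ((i : ℕ) : ℝ) ≤
        ((n : ℝ) + 1) * (((j : ℕ) : ℝ) - ((i : ℕ) : ℝ))) := by
    intro i j hj
    have hij : i < j := Finset.mem_Ioi.mp hj
    have h1 : (i : ℕ) < (j : ℕ) := hij
    have c1 : ((i : ℕ) : ℝ) + 1 ≤ ((j : ℕ) : ℝ) := by exact_mod_cast h1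
    have c2 : (l j : ℝ) ≤ (l i : ℝ) := by exact_mod_cast hmono hij.le
    have c3 : (l i : ℝ) ≤ (n : ℝ) := by exact_mod_cast hli i
    have c4 : (0 : ℝ) ≤ (l j : ℝ) := by positivity
    have c5 : (0 : ℝ) ≤ (n : ℝ) := by positivity
    have c6 : (n : ℝ) * 1 ≤ (n : ℝ) * (((j : ℕ) : ℝ) - ((i : ℕ) : ℝ)) :=
      mul_le_mul_of_nonneg_left (by linarith) c5
    exact ⟨by linarith, by nlinarith⟩
  have hpos : ∀ i : Fin d, ∀ j ∈ Finset.Ioi i,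
      (0 : ℝ) ≤ ((l i : ℝ) - (l j : ℝ)) + ((j : ℕ) : ℝ) - ((i : ℕ) : ℝ) := by
    intro i j hj
    have hij : i < j := Finset.mem_Ioi.mp hj
    have h1 : (i : ℕ) < (j : ℕ) := hij
    have c1 : ((i : ℕ) : ℝ) + 1 ≤ ((j : ℕ) : ℝ) := by exact_mod_cast h1
    have := (hterm i j hj).1
    linarith
  have hlow : ∏ k ∈ Finset.range d, (Nat.factorial k : ℝ) ≤
      ∏ i : Fin d, ∏ j ∈ Finset.Ioi i,
        (((l i : ℝ) - (l j : ℝ)) + ((j : ℕ) : ℝ) - ((i : ℕ) : ℝ)) := by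
    rw [← prod_den d]
    refine Finset.prod_le_prod (fun i _ => Finset.prod_nonneg fun j hj => ?_)
      (fun i _ => Finset.prod_le_prod (fun j hj => ?_) (fun j hj => (hterm i j hj).1))
    · have hij : i < j := Finset.mem_Ioi.mp hj
      have h1 : (i : ℕ) < (j : ℕ) := hij
      have c1 : ((i : ℕ) : ℝ) + 1 ≤ ((j : ℕ) : ℝ) := by exact_mod_cast h1
      linarith
    · have hij : i < j := Finset.mem_Ioi.mp hj
      have h1 : (i : ℕ) < (j : ℕ) := hij
      have c1 : ((i : ℕ) : ℝ) + 1 ≤ ((j : ℕ) : ℝ) := by exact_mod_cast h1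
      linarith
  have hfac : ∏ i : Fin d, ∏ j ∈ Finset.Ioi i,
      (((n : ℝ) + 1) * (((j : ℕ) : ℝ) - ((i : ℕ) : ℝ))) =
      ((n : ℝ) + 1) ^ (∑ i : Fin d, (Finset.Ioi i).card) *
        ∏ k ∈ Finset.range d, (Nat.factorial k : ℝ) := by
    simp_rw [Finset.prod_mul_distrib, Finset.prod_const]
    rw [Finset.prod_pow_eq_pow_sum, prod_den d]
  have hup : ∏ i : Fin d, ∏ j ∈ Finset.Ioi i,
      (((l i : ℝ) - (l j : ℝ)) + ((j : ℕ) : ℝ) - ((i : ℕ) : ℝ)) ≤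
      ((n : ℝ) + 1) ^ (∑ i : Fin d, (Finset.Ioi i).card) *
        ∏ k ∈ Finset.range d, (Nat.factorial k : ℝ) := by
    rw [← hfac]
    exact Finset.prod_le_prod (fun i _ => Finset.prod_nonneg fun j hj => hpos i j hj)
      (fun i _ => Finset.prod_le_prod (fun j hj => hpos i j hj) (fun j hj => (hterm i j hj).2))
  constructor
  · rw [weylDim, le_div_iff₀ hden, one_mul]
    exact hlow
  · rw [weylDim, div_le_iff₀ hden]
    exact hup

theorem cost_rm_le (d n : ℕ) (hd : 2 ≤ d) :
    (⌈Real.logb 2 (sSup (weylDim d '' youngSet n d))⌉ : ℝ)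
        + (⌈Real.logb 2 (∑ᶠ l ∈ youngSet n d, weylDim d l)⌉ : ℝ)
      ≤ ((d : ℝ) ^ 2 - 1) * Real.logb 2 ((n : ℝ) + 1) + 2 := by
  obtain ⟨m, rfl⟩ : ∃ m, d = m + 2 := ⟨d - 2, by omega⟩
  clear hd
  set d := m + 2 with hdd
  -- the exponent from the per-diagram bound
  set C : ℕ := ∑ i : Fin d, (Finset.Ioi i).card with hC
  have hCval : 2 * C = d * (d - 1) := by
    have h1 : C = ∑ k ∈ Finset.range d, (d - 1 - k) := by
      rw [hC]
      simp only [Fin.card_Ioi]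
      exact Fin.sum_univ_eq_sum_range (fun k => d - 1 - k) d
    have h2 : ∑ k ∈ Finset.range d, (d - 1 - k) = ∑ k ∈ Finset.range d, k := by
      have := Finset.sum_range_reflect (fun k => k) d
      simpa using this
    have h3 := Finset.sum_range_id_mul_two d
    omega
  -- finiteness of the young set
  have hfin : (youngSet n d).Finite := by
    apply Set.Finite.subset (Set.Finite.pi (fun _ : Fin d => Set.finite_Iic n))
    intro l hl
    intro i _
    obtain ⟨hmono, hsum⟩ := hl
    calc l i ≤ ∑ j, l j := Finset.single_le_sum (fun j _ => Nat.zero_le _) (Finset.mem_univ i)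
      _ = n := hsum
  -- a canonical element of the young set
  have hl0 : (fun i : Fin d => if (i : ℕ) = 0 then n else 0) ∈ youngSet n d := by
    constructor
    · intro a b hab
      dsimp only
      split_ifs with h1 h2 h2
      · exact le_rfl
      · omega
      · exact Nat.zero_le _
      · exact le_rfl
    · rw [Fin.sum_univ_succ]
      simp
  have hSne : (youngSet n d).Nonempty := ⟨_, hl0⟩
  -- cardinality bound
  have hcard : hfin.toFinset.card ≤ (n + 1) ^ (m + 1) := by
    classical
    have := Finset.card_le_card_of_injOn
      (f := fun (l : Fin d → ℕ) (i : Fin (m + 1)) => (⟨min (l i.castSucc) n, by omega⟩ : Fin (n + 1)))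
      (s := hfin.toFinset) (t := Finset.univ) (fun _ _ => Finset.mem_univ _) ?_
    · calc hfin.toFinset.card ≤ Finset.univ.card := this
        _ = Fintype.card (Fin (m + 1) → Fin (n + 1)) := Finset.card_univ
        _ = (n + 1) ^ (m + 1) := by simp [Fintype.card_fun]
    · intro l hl l' hl' hfl
      simp only [Finset.mem_coe, Set.Finite.mem_toFinset] at hl hl'
      obtain ⟨hmono, hsum⟩ := hl
      obtain ⟨hmono', hsum'⟩ := hl'
      have hli : ∀ i, l i ≤ n := fun i =>
        hsum ▸ Finset.single_le_sum (fun j _ => Nat.zero_le _) (Finset.mem_univ i)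
      have hli' : ∀ i, l' i ≤ n := fun i =>
        hsum' ▸ Finset.single_le_sum (fun j _ => Nat.zero_le _) (Finset.mem_univ i)
      have hcs : ∀ i : Fin (m + 1), l i.castSucc = l' i.castSucc := by
        intro i
        have := congrFun hfl i
        have h2 : min (l i.castSucc) n = min (l' i.castSucc) n := by
          simpa [Fin.ext_iff] using this
        rw [min_eq_left (hli _), min_eq_left (hli' _)] at h2
        exact h2
      funext i
      induction i using Fin.lastCases with
      | last =>
          have e1 : ∑ i : Fin (m + 1), l i.castSucc + l (Fin.last (m + 1)) = n := by
            rw [← Fin.sum_univ_castSucc]; exact hsum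
          have e2 : ∑ i : Fin (m + 1), l' i.castSucc + l' (Fin.last (m + 1)) = n := by
            rw [← Fin.sum_univ_castSucc]; exact hsum'
          have e3 : ∑ i : Fin (m + 1), l i.castSucc = ∑ i : Fin (m + 1), l' i.castSucc :=
            Finset.sum_congr rfl fun i _ => hcs i
          omega
      | cast i => exact hcs i
  -- bounds on d_R
  have hbdd : BddAbove (weylDim d '' youngSet n d) := by
    refine ⟨((n : ℝ) + 1) ^ C, ?_⟩
    rintro x ⟨l, hl, rfl⟩
    exact (weylDim_bounds hl).2
  have hApos : (0 : ℝ) ≤ ((n : ℝ) + 1) ^ C := by positivity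
  have hR1 : (1 : ℝ) ≤ sSup (weylDim d '' youngSet n d) := by
    refine le_trans (weylDim_bounds hl0).1 (le_csSup hbdd ?_)
    exact Set.mem_image_of_mem _ hl0
  have hR2 : sSup (weylDim d '' youngSet n d) ≤ ((n : ℝ) + 1) ^ C :=
    Real.sSup_le (by rintro x ⟨l, hl, rfl⟩; exact (weylDim_bounds hl).2) hApos
  -- bounds on d_tot
  have htot_eq : ∑ᶠ l ∈ youngSet n d, weylDim d l = ∑ l ∈ hfin.toFinset, weylDim d l :=
    finsum_mem_eq_finite_toFinset_sum _ hfin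
  have htot1 : (1 : ℝ) ≤ ∑ᶠ l ∈ youngSet n d, weylDim d l := by
    rw [htot_eq]
    refine le_trans (weylDim_bounds hl0).1 ?_
    refine Finset.single_le_sum (fun l hl => ?_) (hfin.mem_toFinset.mpr hl0)
    have := (weylDim_bounds (hfin.mem_toFinset.mp hl)).1
    linarith
  have htot2 : ∑ᶠ l ∈ youngSet n d, weylDim d l ≤ ((n : ℝ) + 1) ^ (m + 1 + C) := by
    rw [htot_eq]
    calc ∑ l ∈ hfin.toFinset, weylDim d l
        ≤ hfin.toFinset.card • (((n : ℝ) + 1) ^ C) :=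
          Finset.sum_le_card_nsmul _ _ _ fun l hl =>
            (weylDim_bounds (hfin.mem_toFinset.mp hl)).2
      _ = (hfin.toFinset.card : ℝ) * ((n : ℝ) + 1) ^ C := by rw [nsmul_eq_mul]
      _ ≤ ((n : ℝ) + 1) ^ (m + 1) * ((n : ℝ) + 1) ^ C := by
          refine mul_le_mul_of_nonneg_right ?_ hApos
          calc (hfin.toFinset.card : ℝ) ≤ (((n + 1) ^ (m + 1) : ℕ) : ℝ) := by
                exact_mod_cast hcard
            _ = ((n : ℝ) + 1) ^ (m + 1) := by push_cast; ring
      _ = ((n : ℝ) + 1) ^ (m + 1 + C) := by rw [← pow_add, Nat.add_comm (m+1) C, Nat.add_comm C (m+1)]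
  -- logarithm bounds
  have hb : (1 : ℝ) < 2 := one_lt_two
  have hn1 : (1 : ℝ) ≤ (n : ℝ) + 1 := by
    have : (0:ℝ) ≤ (n : ℝ) := Nat.cast_nonneg n
    linarith
  have hLnn : 0 ≤ Real.logb 2 ((n : ℝ) + 1) := Real.logb_nonneg hb hn1
  have hlogR : Real.logb 2 (sSup (weylDim d '' youngSet n d)) ≤
      (C : ℝ) * Real.logb 2 ((n : ℝ) + 1) := by
    calc Real.logb 2 (sSup (weylDim d '' youngSet n d))
        ≤ Real.logb 2 (((n : ℝ) + 1) ^ C) :=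
          Real.logb_le_logb_of_le hb (by linarith) hR2
      _ = (C : ℝ) * Real.logb 2 ((n : ℝ) + 1) := Real.logb_pow 2 _ C
  have hlogT : Real.logb 2 (∑ᶠ l ∈ youngSet n d, weylDim d l) ≤
      ((m + 1 + C : ℕ) : ℝ) * Real.logb 2 ((n : ℝ) + 1) := by
    calc Real.logb 2 (∑ᶠ l ∈ youngSet n d, weylDim d l)
        ≤ Real.logb 2 (((n : ℝ) + 1) ^ (m + 1 + C)) :=
          Real.logb_le_logb_of_le hb (by linarith) htot2
      _ = ((m + 1 + C : ℕ) : ℝ) * Real.logb 2 ((n : ℝ) + 1) := Real.logb_pow 2 _ _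
  have hceil1 : (⌈Real.logb 2 (sSup (weylDim d '' youngSet n d))⌉ : ℝ) ≤
      Real.logb 2 (sSup (weylDim d '' youngSet n d)) + 1 :=
    (Int.ceil_lt_add_one _).le
  have hceil2 : (⌈Real.logb 2 (∑ᶠ l ∈ youngSet n d, weylDim d l)⌉ : ℝ) ≤
      Real.logb 2 (∑ᶠ l ∈ youngSet n d, weylDim d l) + 1 :=
    (Int.ceil_lt_add_one _).le
  have hexp : (C : ℝ) + ((m + 1 + C : ℕ) : ℝ) = ((d : ℝ)) ^ 2 - 1 := by
    have h2C : 2 * C = (m + 2) * (m + 1) := by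
      rw [hCval, hdd]
      congr 1
    have hC' : 2 * (C : ℝ) = ((m : ℝ) + 2) * ((m : ℝ) + 1) := by exact_mod_cast h2C
    have hdc : (d : ℝ) = (m : ℝ) + 2 := by rw [hdd]; push_cast; ring
    rw [hdc]
    push_cast
    linear_combination hC'
  have := mul_le_mul_of_nonneg_right
    (le_of_eq hexp) hLnn
  calc (⌈Real.logb 2 (sSup (weylDim d '' youngSet n d))⌉ : ℝ)
        + (⌈Real.logb 2 (∑ᶠ l ∈ youngSet n d, weylDim d l)⌉ : ℝ)
      ≤ (Real.logb 2 (sSup (weylDim d '' youngSet n d)) + 1)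
        + (Real.logb 2 (∑ᶠ l ∈ youngSet n d, weylDim d l) + 1) := by linarith
    _ ≤ ((C : ℝ) * Real.logb 2 ((n : ℝ) + 1)
        + ((m + 1 + C : ℕ) : ℝ) * Real.logb 2 ((n : ℝ) + 1)) + 2 := by linarith
    _ = ((C : ℝ) + ((m + 1 + C : ℕ) : ℝ)) * Real.logb 2 ((n : ℝ) + 1) + 2 := by ring
    _ ≤ ((d : ℝ) ^ 2 - 1) * Real.logb 2 ((n : ℝ) + 1) + 2 := by
        rw [hexp]
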